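/- If q is not a root of unity, the representations π_{rs} and π_{r's'} of U_q(m_2) (with r,s,r',s' nonzero complex numbers) are equivalent if and only if r' = ±r and s' = q^n s for some integer n. -/

import Mathlib

noncomputable section

/-- The basis vector |m⟩, m ∈ ℤ. -/
def e (m : ℤ) : ℤ →₀ ℂ := Finsupp.single m 1

/-- A linear operator on the space with basis {|m⟩ : m ∈ ℤ}, given by its values on
the basis vectors. -/
def op (f : ℤ → (ℤ →₀ ℂ)) : (ℤ →₀ ℂ) →ₗ[ℂ] (ℤ →₀ ℂ) :=
  Finsupp.lift _ _ _ f

/-- π(q^H)|m⟩ = sqᵐ|m⟩. -/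
def piK (q s : ℂ) : (ℤ →₀ ℂ) →ₗ[ℂ] (ℤ →₀ ℂ) := op fun m => (s * q ^ m) • e m

/-- π(q^{-H})|m⟩ = s⁻¹q⁻ᵐ|m⟩. -/
def piKinv (q s : ℂ) : (ℤ →₀ ℂ) →ₗ[ℂ] (ℤ →₀ ℂ) := op fun m => (s⁻¹ * q ^ (-m)) • e m

/-- π(E)|m⟩ = r|m+1⟩. -/
def piE (r : ℂ) : (ℤ →₀ ℂ) →ₗ[ℂ] (ℤ →₀ ℂ) := op fun m => r • e (m + 1)

/-- π(F)|m⟩ = r|m-1⟩. -/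
def piF (r : ℂ) : (ℤ →₀ ℂ) →ₗ[ℂ] (ℤ →₀ ℂ) := op fun m => r • e (m - 1)

end

lemma op_e (f : ℤ → (ℤ →₀ ℂ)) (m : ℤ) : op f (e m) = f m := by
  rw [op, e, Finsupp.lift_apply, Finsupp.sum_single_index (by simp)]
  simp

lemma op_apply (f : ℤ → (ℤ →₀ ℂ)) (v : ℤ →₀ ℂ) (k : ℤ) :
    op f v k = v.sum fun m a => a * f m k := by
  rw [op, Finsupp.lift_apply, Finsupp.sum_apply]
  simp

lemma piK_apply (q s : ℂ) (v : ℤ →₀ ℂ) (k : ℤ) : piK q s v k = s * q ^ k * v k := by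
  rw [piK, op_apply]
  simp only [Finsupp.smul_apply, e, Finsupp.single_apply, smul_eq_mul, mul_ite, mul_one, mul_zero]
  rw [Finsupp.sum_ite_eq']
  split_ifs with h
  · ring
  · simp [Finsupp.notMem_support_iff.mp h]

lemma single_eq_smul_e (a : ℤ) (b : ℂ) : Finsupp.single a b = b • e a := by
  rw [e, Finsupp.smul_single, smul_eq_mul, mul_one]

lemma e_apply (m k : ℤ) : e m k = if m = k then 1 else 0 := by
  rw [e, Finsupp.single_apply]

lemma e_ne_zero (m : ℤ) : e m ≠ 0 := by
  rw [e]
  exact fun h => one_ne_zero (Finsupp.single_eq_zero.mp h)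

/-- For q not a root of unity, the representations π_{rs} and π_{r's'}
of U_q(m₂) are equivalent (there is a linear isomorphism of the representation space
intertwining the actions of the generators) if and only if r' = ±r and s' = qⁿs for
some integer n. -/
theorem stmt16 (q r s r' s' : ℂ) (hq : q ≠ 0)
    (hroot : ∀ n : ℕ, n ≠ 0 → q ^ n ≠ 1)
    (hr : r ≠ 0) (hs : s ≠ 0) (hr' : r' ≠ 0) (hs' : s' ≠ 0) :
    (∃ A : (ℤ →₀ ℂ) ≃ₗ[ℂ] (ℤ →₀ ℂ),
        (∀ x, A (piK q s x) = piK q s' (A x)) ∧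
        (∀ x, A (piKinv q s x) = piKinv q s' (A x)) ∧
        (∀ x, A (piE r x) = piE r' (A x)) ∧
        (∀ x, A (piF r x) = piF r' (A x))) ↔
    (r' = r ∨ r' = -r) ∧ ∃ n : ℤ, s' = q ^ n * s := by
  have hz1 : ∀ z : ℤ, q ^ z = 1 → z = 0 := by
    have key : ∀ z : ℤ, 0 < z → q ^ z ≠ 1 := by
      intro z hz h
      refine hroot z.toNat (by omega) ?_
      rw [← zpow_natCast, Int.toNat_of_nonneg hz.le]
      exact h
    intro z h
    rcases lt_trichotomy z 0 with h0 | h0 | h0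
    · exact absurd (by rw [zpow_neg, h, inv_one]) (key (-z) (by omega))
    · exact h0
    · exact absurd h (key z h0)
  have hzinj : ∀ a b : ℤ, q ^ a = q ^ b → a = b := by
    intro a b h
    have h1 : q ^ (a - b) = 1 := by
      rw [zpow_sub₀ hq, h, div_self (zpow_ne_zero _ hq)]
    have := hz1 _ h1
    omega
  constructor
  · rintro ⟨A, hK, -, hE, hF⟩
    have eig : ∀ (lam : ℂ) (v : ℤ →₀ ℂ), piK q s' v = lam • v →
        ∀ k, v k ≠ 0 → s' * q ^ k = lam := by
      intro lam v hv k hk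
      have h : piK q s' v k = (lam • v) k := by rw [hv]
      rw [piK_apply, Finsupp.smul_apply, smul_eq_mul] at h
      exact mul_right_cancel₀ hk h
    have hv0 : piK q s' (A (e 0)) = s • A (e 0) := by
      have h := hK (e 0)
      rw [piK, op_e] at h
      rw [← h]
      rw [zpow_zero, mul_one, map_smul]
    have hv1 : piK q s' (A (e 1)) = (s * q) • A (e 1) := by
      have h := hK (e 1)
      rw [piK, op_e] at h
      rw [← h]
      rw [zpow_one, map_smul]
    have hvne : A (e 0) ≠ 0 := fun h => e_ne_zero 0 (A.map_eq_zero_iff.mp h)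
    have hwne : A (e 1) ≠ 0 := fun h => e_ne_zero 1 (A.map_eq_zero_iff.mp h)
    obtain ⟨k, hk⟩ : ∃ k, A (e 0) k ≠ 0 := by
      by_contra h
      push_neg at h
      exact hvne (Finsupp.ext fun j => h j)
    have hks : s' * q ^ k = s := eig s (A (e 0)) hv0 k hk
    have hsupp0 : ∀ j, A (e 0) j ≠ 0 → j = k := by
      intro j hj
      have := (eig s (A (e 0)) hv0 j hj).trans hks.symm
      exact hzinj j k (mul_left_cancel₀ hs' this)
    have hsupp1 : ∀ j, A (e 1) j ≠ 0 → j = k + 1 := by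
      intro j hj
      have h1 : s' * q ^ j = s * q := eig (s * q) (A (e 1)) hv1 j hj
      have h2 : s' * q ^ (k + 1) = s * q := by
        rw [zpow_add₀ hq, zpow_one, ← mul_assoc, hks]
      exact hzinj j (k + 1) (mul_left_cancel₀ hs' (h1.trans h2.symm))
    obtain ⟨j, hj⟩ : ∃ j, A (e 1) j ≠ 0 := by
      by_contra h
      push_neg at h
      exact hwne (Finsupp.ext fun j => h j)
    have hjk : j = k + 1 := hsupp1 j hj
    subst hjk
    set c := A (e 0) k with hc
    set d := A (e 1) (k + 1) with hd
    have hvrep : A (e 0) = c • e k := by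
      ext i
      simp only [Finsupp.smul_apply, e_apply, smul_eq_mul]
      by_cases hik : i = k
      · subst hik; simp; rfl
      · rw [if_neg (fun h => hik h.symm), mul_zero]
        by_contra h
        exact hik (hsupp0 i h)
    have hwrep : A (e 1) = d • e (k + 1) := by
      ext i
      simp only [Finsupp.smul_apply, e_apply, smul_eq_mul]
      by_cases hik : i = k + 1
      · subst hik; simp; rfl
      · rw [if_neg (fun h => hik h.symm), mul_zero]
        by_contra h
        exact hik (hsupp1 i h)
    -- E relation: r * d = c * r'
    have hE0 := hE (e 0)
    rw [piE, op_e, show (0:ℤ) + 1 = 1 by norm_num, map_smul, hwrep, hvrep, map_smul, piE,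
      op_e] at hE0
    -- hE0 : r • d • e (k+1) = c • r' • e (k+1)
    have hE' : r * d = c * r' := by
      have h := DFunLike.congr_fun hE0 (k + 1)
      simpa [e_apply] using h
    -- F relation: r * c = d * r'
    have hF1 := hF (e 1)
    rw [piF, op_e, show (1:ℤ) - 1 = 0 by norm_num, map_smul, hvrep, hwrep, map_smul, piF,
      op_e, show k + 1 - 1 = k by ring] at hF1
    have hF' : r * c = d * r' := by
      have h := DFunLike.congr_fun hF1 k
      simpa [e_apply] using h
    constructor
    · have hsq : r' * r' = r * r := by
        have h : (r * r) * c = (r' * r') * c := by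
          calc (r * r) * c = r * (r * c) := by ring
          _ = r * (d * r') := by rw [hF']
          _ = (r * d) * r' := by ring
          _ = (c * r') * r' := by rw [hE']
          _ = (r' * r') * c := by ring
        exact (mul_right_cancel₀ hk h).symm
      exact mul_self_eq_mul_self_iff.mp hsq
    · refine ⟨-k, ?_⟩
      rw [← hks, zpow_neg, mul_comm s', ← mul_assoc, inv_mul_cancel₀ (zpow_ne_zero k hq),
        one_mul]
  · rintro ⟨hrr, n, rfl⟩
    have ht0 : (r' / r) ≠ 0 := div_ne_zero hr' hr
    set t := r' / r with htdef
    have ht2 : t * t = 1 := by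
      rcases hrr with h | h <;> rw [htdef, h] <;> field_simp
    have htm : ∀ m : ℤ, t ^ m * t ^ m = 1 := fun m => by
      rw [← mul_zpow, ht2, one_zpow]
    have htr : r * t = r' := by rw [htdef]; field_simp
    have hti : t⁻¹ = t := inv_eq_of_mul_eq_one_right ht2
    set Af : (ℤ →₀ ℂ) →ₗ[ℂ] (ℤ →₀ ℂ) := op fun m => t ^ m • e (m - n) with hAf
    set Bf : (ℤ →₀ ℂ) →ₗ[ℂ] (ℤ →₀ ℂ) := op fun m => t ^ (m + n) • e (m + n) with hBf
    have hAB : Af ∘ₗ Bf = LinearMap.id := by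
      apply Finsupp.lhom_ext
      intro a b
      simp only [single_eq_smul_e, LinearMap.comp_apply, LinearMap.id_apply, hAf, hBf,
        map_smul, op_e, smul_smul]
      rw [show a + n - n = a from by ring, htm, mul_one]
    have hBA : Bf ∘ₗ Af = LinearMap.id := by
      apply Finsupp.lhom_ext
      intro a b
      simp only [single_eq_smul_e, LinearMap.comp_apply, LinearMap.id_apply, hAf, hBf,
        map_smul, op_e, smul_smul]
      rw [show a - n + n = a from by ring, htm, mul_one]
    refine ⟨LinearEquiv.ofLinear Af Bf hAB hBA, ?_, ?_, ?_, ?_⟩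
    · have hmap : Af ∘ₗ piK q s = piK q (q ^ n * s) ∘ₗ Af := by
        apply Finsupp.lhom_ext
        intro a b
        simp only [single_eq_smul_e, LinearMap.comp_apply, piK, hAf, map_smul, op_e, smul_smul]
        congr 1
        rw [zpow_sub₀ hq]
        field_simp
      intro x
      simpa using LinearMap.congr_fun hmap x
    · have hmap : Af ∘ₗ piKinv q s = piKinv q (q ^ n * s) ∘ₗ Af := by
        apply Finsupp.lhom_ext
        intro a b
        simp only [single_eq_smul_e, LinearMap.comp_apply, piKinv, hAf, map_smul, op_e, smul_smul]
        congr 1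
        rw [zpow_neg, zpow_neg, zpow_sub₀ hq, mul_inv]
        field_simp
      intro x
      simpa using LinearMap.congr_fun hmap x
    · have hmap : Af ∘ₗ piE r = piE r' ∘ₗ Af := by
        apply Finsupp.lhom_ext
        intro a b
        simp only [single_eq_smul_e, LinearMap.comp_apply, piE, hAf, map_smul, op_e, smul_smul]
        rw [show a + 1 - n = a - n + 1 from by ring]
        congr 1
        rw [zpow_add_one₀ ht0, ← htr]
        ring
      intro x
      simpa using LinearMap.congr_fun hmap x
    · have hmap : Af ∘ₗ piF r = piF r' ∘ₗ Af := by
        apply Finsupp.lhom_ext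
        intro a b
        simp only [single_eq_smul_e, LinearMap.comp_apply, piF, hAf, map_smul, op_e, smul_smul]
        rw [show a - 1 - n = a - n - 1 from by ring]
        congr 1
        rw [zpow_sub_one₀ ht0, hti, ← htr]
        ring
      intro x
      simpa using LinearMap.congr_fun hmap x
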